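/- There exists a unique group homomorphism SGE : B_n → Mat_n(ℤ) ⋊ S_n such that SGE(σ_i) = (O_{i,i+1}, (i, i+1)) for every i ∈ {1,…,n−1}. Equivalently, the elements (O_{i,i+1}, (i,i+1)) of Mat_n(ℤ) ⋊ S_n satisfy the braid relations: (O_{i,i+1},(i,i+1))·(O_{i+1,i+2},(i+1,i+2))·(O_{i,i+1},(i,i+1)) = (O_{i+1,i+2},(i+1,i+2))·(O_{i,i+1},(i,i+1))·(O_{i+1,i+2},(i+1,i+2)) for 1 ≤ i ≤ n−2, and the corresponding elements for non-adjacent indices commute. -/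

import Mathlib

/-- The braid relations. -/
def braidRels (n : ℕ) : Set (FreeGroup (Fin (n - 1))) :=
  {r | (∃ i j : Fin (n - 1), (j : ℕ) = (i : ℕ) + 1 ∧
        r = .of i * .of j * .of i * (.of j * .of i * .of j)⁻¹) ∨
       (∃ i j : Fin (n - 1), (i : ℕ) + 2 ≤ (j : ℕ) ∧
        r = .of i * .of j * (.of j * .of i)⁻¹)}

/-- The braid group `B_n`. -/
abbrev BraidGroup (n : ℕ) := PresentedGroup (braidRels n)

/-- The Artin generator `σ_{k+1}` (0-based index `k`). -/
def braidGen {n : ℕ} (i : Fin (n - 1)) : BraidGroup n := PresentedGroup.of i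

/-- The strand index `k`, viewed inside `Fin n`. -/
def lo {n : ℕ} (k : Fin (n - 1)) : Fin n := ⟨k, by have := k.isLt; omega⟩

/-- The strand index `k + 1`, viewed inside `Fin n`. -/
def hi {n : ℕ} (k : Fin (n - 1)) : Fin n := ⟨(k : ℕ) + 1, by have := k.isLt; omega⟩

/-- The action of `S_n` on `n × n` integer matrices, simultaneously permuting rows and
columns: `(π·M)[i,j] = M[π⁻¹ i, π⁻¹ j]`. -/
def matPermAct (n : ℕ) :
    Equiv.Perm (Fin n) →* MulAut (Multiplicative (Matrix (Fin n) (Fin n) ℤ)) where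
  toFun π :=
    { toFun := fun M => Multiplicative.ofAdd fun i j => Multiplicative.toAdd M (π⁻¹ i) (π⁻¹ j)
      invFun := fun M => Multiplicative.ofAdd fun i j => Multiplicative.toAdd M (π i) (π j)
      left_inv := fun M => by
        change (fun i j => M (π⁻¹ (π i)) (π⁻¹ (π j)) : Matrix (Fin n) (Fin n) ℤ) = M; simp
      right_inv := fun M => by
        change (fun i j => M (π (π⁻¹ i)) (π (π⁻¹ j)) : Matrix (Fin n) (Fin n) ℤ) = M; simp
      map_mul' := fun M M' => rfl }
  map_one' := by ext M; simp
  map_mul' := fun π ρ => by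
    ext M
    simp [Equiv.Perm.mul_apply]
    rfl

/-- The semidirect product `Mat_n(ℤ) ⋊ S_n`. -/
abbrev SGEGroup (n : ℕ) :=
  SemidirectProduct (Multiplicative (Matrix (Fin n) (Fin n) ℤ)) (Equiv.Perm (Fin n))
    (matPermAct n)

/-- The value `(O_{k,k+1}, (k, k+1))` of the super-Gauss-Epple homomorphism on the
generator `σ_k`, where `O_{i,j}` is the matrix with a single `1` entry at `(i,j)`. -/
def sgeGen {n : ℕ} (k : Fin (n - 1)) : SGEGroup n :=
  ⟨Multiplicative.ofAdd (Matrix.single (lo k) (hi k) 1), Equiv.swap (lo k) (hi k)⟩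


section Aux

lemma act_std {n : ℕ} (π : Equiv.Perm (Fin n)) (a b : Fin n) :
    (matPermAct n π) (Multiplicative.ofAdd (Matrix.single a b (1 : ℤ)))
      = Multiplicative.ofAdd (Matrix.single (π a) (π b) 1) := by
  show Multiplicative.ofAdd (fun i j => Multiplicative.toAdd
      (Multiplicative.ofAdd (Matrix.single a b (1 : ℤ))) (π⁻¹ i) (π⁻¹ j)) = _
  congr 1
  funext i j
  simp only [toAdd_ofAdd, Matrix.single, Matrix.of_apply]
  have h1 : (a = π⁻¹ i) ↔ (π a = i) := by
    constructor
    · intro h; rw [h]; simp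
    · intro h; rw [← h]; simp
  have h2 : (b = π⁻¹ j) ↔ (π b = j) := by
    constructor
    · intro h; rw [h]; simp
    · intro h; rw [← h]; simp
  simp only [h1, h2]

lemma sge_braid {n : ℕ} (i j : Fin (n - 1)) (h : (j : ℕ) = (i : ℕ) + 1) :
    sgeGen i * sgeGen j * sgeGen i = sgeGen j * sgeGen i * sgeGen j := by
  set a : Fin n := lo i with ha
  set b : Fin n := hi i with hb
  set c : Fin n := hi j with hc
  have hloj : lo j = b := by
    apply Fin.ext; simp [lo, hi, hb, h]
  have hab : a ≠ b := by apply Fin.ne_of_val_ne; simp [ha, hb, lo, hi]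
  have hbc : b ≠ c := by apply Fin.ne_of_val_ne; simp [hb, hc, lo, hi, h]
  have hac : a ≠ c := by apply Fin.ne_of_val_ne; simp [ha, hc, lo, hi, h]; omega
  have sgi : sgeGen i = ⟨Multiplicative.ofAdd (Matrix.single a b 1), Equiv.swap a b⟩ := rfl
  have sgj : sgeGen j = ⟨Multiplicative.ofAdd (Matrix.single b c 1), Equiv.swap b c⟩ := by
    rw [show sgeGen j = ⟨Multiplicative.ofAdd (Matrix.single (lo j) (hi j) 1),
      Equiv.swap (lo j) (hi j)⟩ from rfl, hloj]
  refine SemidirectProduct.ext ?_ ?_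
  · -- left component
    simp only [sgi, sgj, SemidirectProduct.mul_left, SemidirectProduct.mul_right, map_mul,
      act_std, MulAut.mul_apply]
    simp only [Equiv.swap_apply_left, Equiv.swap_apply_right,
      Equiv.swap_apply_of_ne_of_ne hac.symm hbc.symm,
      Equiv.swap_apply_of_ne_of_ne hab hac,
      Equiv.swap_apply_of_ne_of_ne hab.symm hbc]
    rw [← ofAdd_add, ← ofAdd_add, ← ofAdd_add, ← ofAdd_add]
    congr 1
    abel
  · -- right component
    simp only [sgi, sgj, SemidirectProduct.mul_right]
    rw [show Equiv.swap a b * Equiv.swap b c * Equiv.swap a b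
        = Equiv.swap b a * Equiv.swap c b * Equiv.swap b a by
          rw [Equiv.swap_comm a b, Equiv.swap_comm b c],
      Equiv.swap_mul_swap_mul_swap hbc.symm hac.symm,
      Equiv.swap_mul_swap_mul_swap hab hac, Equiv.swap_comm]

lemma sge_comm {n : ℕ} (i j : Fin (n - 1)) (h : (i : ℕ) + 2 ≤ (j : ℕ)) :
    sgeGen i * sgeGen j = sgeGen j * sgeGen i := by
  set a : Fin n := lo i with ha
  set b : Fin n := hi i with hb
  set c : Fin n := lo j with hc
  set d : Fin n := hi j with hd
  have hca : c ≠ a := by apply Fin.ne_of_val_ne; simp [ha, hc, lo]; omega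
  have hcb : c ≠ b := by apply Fin.ne_of_val_ne; simp [hb, hc, lo, hi]; omega
  have hda : d ≠ a := by apply Fin.ne_of_val_ne; simp [ha, hd, lo, hi]; omega
  have hdb : d ≠ b := by apply Fin.ne_of_val_ne; simp [hb, hd, lo, hi]; omega
  have sgi : sgeGen i = ⟨Multiplicative.ofAdd (Matrix.single a b 1), Equiv.swap a b⟩ := rfl
  have sgj : sgeGen j = ⟨Multiplicative.ofAdd (Matrix.single c d 1), Equiv.swap c d⟩ := rfl
  have hswap : Equiv.swap a b * Equiv.swap c d = Equiv.swap c d * Equiv.swap a b := by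
    have h1 : Equiv.swap a b * Equiv.swap c d * (Equiv.swap a b)⁻¹ = Equiv.swap c d := by
      rw [← Equiv.swap_apply_apply, Equiv.swap_apply_of_ne_of_ne hca hcb,
        Equiv.swap_apply_of_ne_of_ne hda hdb]
    exact mul_inv_eq_iff_eq_mul.mp h1
  refine SemidirectProduct.ext ?_ ?_
  · simp only [sgi, sgj, SemidirectProduct.mul_left]
    rw [act_std, act_std, Equiv.swap_apply_of_ne_of_ne hca hcb,
      Equiv.swap_apply_of_ne_of_ne hda hdb,
      Equiv.swap_apply_of_ne_of_ne hca.symm hda.symm,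
      Equiv.swap_apply_of_ne_of_ne hcb.symm hdb.symm,
      ← ofAdd_add, ← ofAdd_add]
    congr 1
    abel
  · simp only [sgi, sgj, SemidirectProduct.mul_right, hswap]

end Aux

/-- There is a unique group homomorphism `SGE : B_n → Mat_n(ℤ) ⋊ S_n` with
`SGE(σ_k) = (O_{k,k+1}, (k,k+1))`; equivalently, these elements of `Mat_n(ℤ) ⋊ S_n`
satisfy the braid relations. -/
theorem super_gauss_epple_exists_unique (n : ℕ) (hn : 2 ≤ n) :
    ∃! SGE : BraidGroup n →* SGEGroup n,
      ∀ k : Fin (n - 1), SGE (braidGen k) = sgeGen k := by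
  have key : ∀ r ∈ braidRels n, FreeGroup.lift (sgeGen (n := n)) r = 1 := by
    rintro r (⟨i, j, hij, rfl⟩ | ⟨i, j, hij, rfl⟩) <;>
      simp only [map_mul, map_inv, FreeGroup.lift_apply_of, mul_inv_eq_one]
    · exact sge_braid i j hij
    · exact sge_comm i j hij
  refine ⟨PresentedGroup.toGroup key, fun k => PresentedGroup.toGroup.of key, ?_⟩
  intro g hg
  exact MonoidHom.ext fun x => PresentedGroup.toGroup.unique key g hg
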